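/- arXiv:1510.02637 — 2 statements merged into one kernel-verified Lean document; each statement's English description precedes it below -/
import Mathlib

section
/- If w is a self-minimal word of length n over Σ and d is a positive divisor of n, then (w_(d))^(n/d) ≤ w in the lexicographic order. -/
namespace Lyndon

variable {α : Type*}

/-- `rot w c` is the cyclic rotation of `w` obtained by moving its first `c mod |w|`
letters to the end. -/
def rot (w : List α) (c : ℕ) : List α :=
  w.drop (c % w.length) ++ w.take (c % w.length)

/-- `power w k` is the concatenation of `k` copies of `w`. -/
def power (w : List α) (k : ℕ) : List α := (List.replicate k w).flatten

/-- `minrot w` is the lexicographically minimal cyclic rotation of `w`. -/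
def minrot [LinearOrder α] (w : List α) : List α :=
  ((List.range w.length).map (rot w)).foldr min w

/-- A word is self-minimal if it equals its minimal cyclic rotation. -/
def SelfMinimal [LinearOrder α] (w : List α) : Prop := minrot w = w

/-- A word is primitive if it is a `k`-th power (for a positive integer `k`)
only of itself. -/
def Primitive (w : List α) : Prop :=
  ∀ (u : List α) (k : ℕ), 0 < k → w = power u k → u = w

/-- A Lyndon word is a nonempty word that is primitive and self-minimal. -/
def IsLyndon [LinearOrder α] (w : List α) : Prop :=
  w ≠ [] ∧ Primitive w ∧ SelfMinimal w

/-- `Pref₋(w)`: the words `w_(i)·s` for `0 ≤ i ≤ n-1` and a letter `s < w[i+1]`,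
together with `w` itself. -/
def PrefMinus [LinearOrder α] (w : List α) : Set (List α) :=
  {y | (∃ i : Fin w.length, ∃ s : α, s < w.get i ∧ y = w.take i ++ [s]) ∨ y = w}

/-- `L(w)`: the words containing a factor (contiguous subword) from `Pref₋(w)`. -/
def InL [LinearOrder α] (w x : List α) : Prop :=
  ∃ y ∈ PrefMinus w, y <:+: x

lemma foldr_min_le [LinearOrder α] (b : α) (l : List α) {x : α} (hx : x ∈ l) :
    l.foldr min b ≤ x := by
  induction l with
  | nil => cases hx
  | cons a l ih =>
    rcases List.mem_cons.1 hx with rfl | h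
    · exact min_le_left _ _
    · exact le_trans (min_le_right _ _) (ih h)

lemma rot_eq_rotate (w : List α) (c : ℕ) : rot w c = w.rotate c := by
  rcases eq_or_ne w [] with rfl | h
  · simp [rot]
  · rw [← List.rotate_mod, List.rotate_eq_drop_append_take (le_of_lt (Nat.mod_lt _ (List.length_pos_iff.2 h)))]
    rfl

lemma le_rot [LinearOrder α] {w : List α} (hsm : SelfMinimal w) {c : ℕ}
    (hc : c < w.length) : w ≤ rot w c := by
  have : rot w c ∈ (List.range w.length).map (rot w) :=
    List.mem_map.2 ⟨c, List.mem_range.2 hc, rfl⟩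
  have h2 : minrot w ≤ rot w c := foldr_min_le w _ this
  rwa [hsm] at h2

lemma power_length (u : List α) (k : ℕ) : (power u k).length = k * u.length := by
  induction k with
  | zero => simp [power]
  | succ k ih =>
    simp only [power, List.replicate_succ, List.flatten_cons, List.length_append]
    rw [power] at ih; rw [ih]; ring

lemma power_getElem (u : List α) (k i : ℕ) (hi : i < (power u k).length)
    (hm : i % u.length < u.length) :
    (power u k)[i] = u[i % u.length] := by
  induction k generalizing i with
  | zero => simp [power] at hi
  | succ k ih =>
    have hrep : power u (k+1) = u ++ power u k := by
      simp [power, List.replicate_succ]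
    rcases lt_or_ge i u.length with h | h
    · simp_rw [hrep]
      rw [List.getElem_append_left h]
      congr 1
      exact (Nat.mod_eq_of_lt h).symm
    · simp_rw [hrep] at hi ⊢
      rw [List.getElem_append_right h]
      have hlen : i - u.length < (power u k).length := by
        rw [List.length_append] at hi; omega
      rw [ih _ hlen]
      congr 1
      conv_rhs => rw [← Nat.sub_add_cancel h]
      rw [Nat.add_mod_right]
      exact Nat.mod_lt _ (by omega)

/-- derive first difference from strict lex inequality on equal-length lists -/
lemma exists_firstdiff [LinearOrder α] {x y : List α} (h : List.Lex (·<·) x y)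
    (hlen : x.length = y.length) :
    ∃ i, ∃ (h1 : i < x.length) (h2 : i < y.length),
      (∀ m (hm1 : m < x.length) (hm2 : m < y.length), m < i → x[m] = y[m]) ∧ x[i] < y[i] := by
  induction h with
  | nil => simp at hlen
  | @cons a l₁ l₂ h ih =>
    have : l₁.length = l₂.length := by simpa using hlen
    obtain ⟨i, h1, h2, hagre, hlt⟩ := ih this
    refine ⟨i+1, by simpa using h1, by simpa using h2, ?_, by simpa using hlt⟩
    intro m hm1 hm2 hmi
    cases m with
    | zero => rfl
    | succ m => simpa using hagre m (by simpa using hm1) (by simpa using hm2) (by omega)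
  | @rel a b l₁ l₂ h =>
    exact ⟨0, by simp, by simp, by omega, by simpa using h⟩

/-- build strict lex inequality from a first difference -/
lemma lex_of_firstdiff [LinearOrder α] {x y : List α} {i : ℕ}
    (h1 : i < x.length) (h2 : i < y.length)
    (hagree : ∀ m (hm1 : m < x.length) (hm2 : m < y.length), m < i → x[m] = y[m])
    (hlt : x[i] < y[i]) : List.Lex (·<·) x y := by
  induction x generalizing y i with
  | nil => simp at h1
  | cons a x ih =>
    cases y with
    | nil => simp at h2
    | cons b y =>
      cases i with
      | zero => exact List.Lex.rel (by simpa using hlt)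
      | succ i =>
        have hab : a = b := by
          have := hagree 0 (by simp) (by simp) (by omega)
          simpa using this
        subst hab
        refine List.Lex.cons (ih (by simpa using h1) (by simpa using h2) ?_ (by simpa using hlt))
        intro m hm1 hm2 hmi
        have := hagree (m+1) (by simpa using hm1) (by simpa using hm2) (by omega)
        simp only [List.getElem_cons_succ] at this
        exact this




/-- If `w` is a self-minimal word of length `n` and `d` is a positive divisor of `n`,
then `(w_(d))^(n/d) ≤ w` in the lexicographic order. -/
theorem stmt_0 [LinearOrder α] [Fintype α] [Nonempty α]
    (w : List α) (n d : ℕ) (hw : w.length = n) (hsm : SelfMinimal w)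
    (hd : d ∣ n) (hd0 : 0 < d) :
    power (w.take d) (n / d) ≤ w := by
  subst hw
  rcases Nat.eq_zero_or_pos w.length with h0 | h0
  · have hwnil : w = [] := List.eq_nil_of_length_eq_zero h0
    subst hwnil
    simp [power]
  have hdn : d ≤ w.length := Nat.le_of_dvd h0 hd
  set u := w.take d with hu_def
  have hu : u.length = d := by
    rw [hu_def, List.length_take]; omega
  set k := w.length / d with hk_def
  have hplen : (power u k).length = w.length := by
    rw [power_length, hu, hk_def, Nat.div_mul_cancel hd]
  by_contra hle
  have hlex : List.Lex (·<·) w (power u k) := lt_of_not_ge hle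
  obtain ⟨i, h1, h2, hagree, hlti⟩ := exists_firstdiff hlex hplen.symm
  -- p[i] = w[i % d]
  have hpi : ∀ m (hm : m < (power u k).length), (power u k)[m] = w[m % d]'(by
      have := Nat.mod_lt m hd0; omega) := by
    intro m hm
    rw [power_getElem u k m hm (by rw [hu]; exact Nat.mod_lt _ (by omega))]
    simp_rw [hu]
    exact List.getElem_take
  -- periodicity on the prefix of length i
  have hper : ∀ m (hm : m < i), w[m]'(by omega) = w[m % d]'(by
      have := Nat.mod_lt m hd0; omega) := by
    intro m hm
    have := hagree m (by omega) (by omega) hm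
    rw [this, hpi m (by omega)]
  set r := i % d with hr_def
  set j := i - r with hj_def
  have hdm : d * (i / d) + i % d = i := Nat.div_add_mod i d
  have hjd : j = d * (i / d) := by omega
  have hrd : r < d := by rw [hr_def]; exact Nat.mod_lt _ (by omega)
  have hij : i = j + r := by omega
  have hjn : j < w.length := by omega
  have hrn : r < w.length := by omega
  -- w ≤ rot w j
  have hmin : w ≤ rot w j := le_rot hsm hjn
  -- but rot w j < w
  have hrotlen : (w.rotate j).length = w.length := List.length_rotate w j
  have hlex2 : List.Lex (·<·) (w.rotate j) w := by
    apply lex_of_firstdiff (i := r) (by omega) hrn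
    · intro t ht1 ht2 htr
      rw [List.getElem_rotate]
      have htj : (t + j) % w.length = t + j := Nat.mod_eq_of_lt (by omega)
      simp_rw [htj]
      have h1 : w[t + j]'(by omega) = w[(t + j) % d]'(by
          have := Nat.mod_lt (t+j) hd0; omega) := hper (t + j) (by omega)
      have h2 : (t + j) % d = t := by
        rw [hjd, Nat.add_mul_mod_self_left, Nat.mod_eq_of_lt (by omega)]
      rw [h1]
      congr 1
    · rw [List.getElem_rotate]
      have hrj : (r + j) % w.length = i := by rw [Nat.mod_eq_of_lt (by omega)]; omega
      simp_rw [hrj]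
      have h3 : w[i] < w[i % d]'(by have := Nat.mod_lt i hd0; omega) := by
        have := hpi i h2
        rw [this] at hlti
        exact hlti
      have h4 : i % d = r := rfl
      simp_rw [h4] at h3
      exact h3
  have : rot w j < w := by rw [rot_eq_rotate]; exact hlex2
  exact absurd this hmin.not_gt
end Lyndon
end

section
/- For all words w and x of the same length n ≥ 1 over Σ: minrot(x) ≤ w if and only if the word x·x (the concatenation of x with itself) contains a factor (contiguous subword) belonging to Pref_-(w). -/
namespace Lyndon

variable {α : Type*}

-- auxiliary lemmas

lemma rot_length (w : List α) (c : ℕ) : (rot w c).length = w.length := by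
  simp [rot]
  omega

lemma rot_infix (x : List α) (c : ℕ) : rot x c <:+: x ++ x := by
  set m := c % x.length with hm
  refine ⟨x.take m, x.drop m, ?_⟩
  rw [rot]
  calc x.take m ++ (x.drop m ++ x.take m) ++ x.drop m
      = (x.take m ++ x.drop m) ++ (x.take m ++ x.drop m) := by
        simp only [List.append_assoc]
    _ = x ++ x := by rw [List.take_append_drop]

lemma foldr_min_le_init [LinearOrder β] (l : List β) (b : β) : l.foldr min b ≤ b := by
  induction l with
  | nil => simp
  | cons a t ih => exact le_trans (min_le_right _ _) ih

lemma foldr_min_le_mem [LinearOrder β] (l : List β) (b : β) {a : β} (ha : a ∈ l) :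
    l.foldr min b ≤ a := by
  induction l with
  | nil => simp at ha
  | cons c t ih =>
    rcases List.mem_cons.1 ha with rfl | ha
    · exact min_le_left _ _
    · exact le_trans (min_le_right _ _) (ih ha)

lemma foldr_min_mem [LinearOrder β] (l : List β) (b : β) :
    l.foldr min b = b ∨ l.foldr min b ∈ l := by
  induction l with
  | nil => left; rfl
  | cons c t ih =>
    rcases le_or_gt c (t.foldr min b) with h | h
    · right; simp [List.foldr, min_eq_left h]
    · have : min c (t.foldr min b) = t.foldr min b := min_eq_right h.le
      rcases ih with h2 | h2
      · left; rw [List.foldr_cons, this, h2]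
      · right; rw [List.foldr_cons, this]; exact List.mem_cons_of_mem _ h2

lemma minrot_le_rot [LinearOrder α] (x : List α) (hx : x ≠ []) (c : ℕ) :
    minrot x ≤ rot x c := by
  have hc : c % x.length ∈ List.range x.length :=
    List.mem_range.2 (Nat.mod_lt _ (List.length_pos_iff.2 hx))
  have heq : rot x (c % x.length) = rot x c := by
    rw [rot, rot, Nat.mod_mod_of_dvd c dvd_rfl]
  rw [← heq]
  exact foldr_min_le_mem _ _ (List.mem_map.2 ⟨c % x.length, hc, rfl⟩)

lemma minrot_eq_rot [LinearOrder α] (x : List α) (hx : x ≠ []) :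
    ∃ c, minrot x = rot x c := by
  rcases foldr_min_mem ((List.range x.length).map (rot x)) x with h | h
  · exact ⟨0, by rw [minrot, h, rot]; simp⟩
  · rcases List.mem_map.1 h with ⟨c, _, hc⟩
    exact ⟨c, hc.symm⟩

lemma lex_mismatch [LinearOrder α] {u v : List α} (h : List.Lex (· < ·) u v)
    (hl : u.length = v.length) :
    ∃ i a b, u.take i = v.take i ∧ u[i]? = some a ∧ v[i]? = some b ∧ a < b := by
  induction h with
  | nil => simp at hl
  | rel h => exact ⟨0, _, _, rfl, rfl, rfl, h⟩
  | @cons a l₁ l₂ h ih =>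
    obtain ⟨i, x, y, h1, h2, h3, h4⟩ := ih (by simpa using hl)
    refine ⟨i + 1, x, y, by simp [h1], ?_, ?_, h4⟩
    · rw [List.getElem?_cons_succ]; exact h2
    · rw [List.getElem?_cons_succ]; exact h3

lemma lex_of_take [LinearOrder α] :
    ∀ (i : ℕ) (v : List α) (s : α) (t : List α) (b : α),
      v[i]? = some b → s < b → List.Lex (· < ·) (v.take i ++ s :: t) v := by
  intro i
  induction i with
  | zero =>
    rintro (_ | ⟨a, v⟩) s t b hb hs
    · simp at hb
    · simp at hb; subst hb
      exact List.Lex.rel hs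
  | succ i ih =>
    rintro (_ | ⟨a, v⟩) s t b hb hs
    · simp at hb
    · simp only [List.getElem?_cons_succ] at hb
      simpa using List.Lex.cons (a := a) (ih v s t b hb hs)

/-- For words `w, x` of the same length `n ≥ 1`: `minrot(x) ≤ w` iff `x·x` contains
a factor belonging to `Pref₋(w)`. -/
theorem stmt_10 [LinearOrder α] [Fintype α] [Nonempty α]
    (w x : List α) (n : ℕ) (hn : 1 ≤ n) (hw : w.length = n) (hx : x.length = n) :
    minrot x ≤ w ↔ ∃ y ∈ PrefMinus w, y <:+: x ++ x := by
  have hxne : x ≠ [] := by intro h; rw [h] at hx; simp at hx; omega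
  constructor
  · intro hle
    obtain ⟨c, hc⟩ := minrot_eq_rot x hxne
    have hlen : (minrot x).length = n := by rw [hc, rot_length, hx]
    rcases eq_or_lt_of_le hle with heq | hlt
    · refine ⟨w, Or.inr rfl, ?_⟩
      rw [← heq, hc]; exact rot_infix x c
    · have hlex : List.Lex (· < ·) (minrot x) w := hlt
      obtain ⟨i, a, b, h1, h2, h3, h4⟩ := lex_mismatch hlex (by rw [hlen, hw])
      have hiw : i < w.length := by
        by_contra h
        rw [List.getElem?_eq_none (le_of_not_gt h)] at h3; simp at h3
      have hbw : w.get ⟨i, hiw⟩ = b := by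
        rw [List.getElem?_eq_getElem hiw] at h3; exact (Option.some_inj.1 h3)
      refine ⟨w.take i ++ [a], Or.inl ⟨⟨i, hiw⟩, a, by rw [hbw]; exact h4, rfl⟩, ?_⟩
      have htake : (minrot x).take (i + 1) = w.take i ++ [a] := by
        rw [List.take_succ, h1]
        simp [h2]
      have : w.take i ++ [a] <+: minrot x := htake ▸ List.take_prefix _ _
      exact this.isInfix.trans (hc ▸ rot_infix x c)
  · rintro ⟨y, hy, hinf⟩
    -- y is a prefix of some rotation
    have hylen : y.length ≤ n := by
      rcases hy with ⟨i, s, _, rfl⟩ | rfl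
      · simp; omega
      · omega
    have hrotpre : ∃ c, y <+: rot x c := by
      obtain ⟨s, t, hst⟩ := hinf
      have hdrop : y <+: (x ++ x).drop s.length := by
        rw [← hst, List.drop_append]
        simp
      rcases Nat.lt_or_ge s.length n with hp | hp
      · refine ⟨s.length, List.prefix_of_prefix_length_le hdrop ?_ ?_⟩
        · have h1 : (x ++ x).drop s.length = x.drop s.length ++ x := by
            rw [List.drop_append,
              Nat.sub_eq_zero_of_le (by omega : s.length ≤ x.length), List.drop_zero]
          rw [rot, hx, Nat.mod_eq_of_lt hp, h1]
          exact ⟨x.drop s.length, by rw [List.append_assoc, List.take_append_drop]⟩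
        · rw [rot_length, hx]; exact hylen
      · rcases eq_or_ne y [] with rfl | hyne
        · exact ⟨0, List.nil_prefix⟩
        · have hq : s.length - n < n := by
            have hceq := congrArg List.length hst
            simp [hx] at hceq
            have hy0 : 0 < y.length := List.length_pos_iff.2 hyne
            omega
          have hdrop2 : (x ++ x).drop s.length = x.drop (s.length - n) := by
            rw [List.drop_append, List.drop_eq_nil_of_le (by omega : x.length ≤ s.length)]
            simp [hx]
          refine ⟨s.length - n, ?_⟩
          rw [hdrop2] at hdrop
          rw [rot, hx, Nat.mod_eq_of_lt hq]
          exact hdrop.trans (List.prefix_append _ _)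
    obtain ⟨c, hpre⟩ := hrotpre
    rcases hy with ⟨i, s, hs, rfl⟩ | heq
    · -- pref-minus case
      obtain ⟨t, ht⟩ := hpre
      have hlex : List.Lex (· < ·) (rot x c) w := by
        rw [← ht, List.append_assoc, List.singleton_append]
        exact lex_of_take i w s t (w.get i) (List.getElem?_eq_getElem i.isLt) hs
      have : rot x c < w := hlex
      exact le_of_lt (lt_of_le_of_lt (minrot_le_rot x hxne c) this)
    · rw [heq] at hpre
      have hweq : w = rot x c := hpre.eq_of_length (by rw [hw, rot_length, hx])
      rw [hweq]; exact minrot_le_rot x hxne c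

end Lyndon
end
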